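/- Let f : ℝ/ℤ → ℂ be integrable, let h > 0, and let n be a positive integer with |e^{2πinh} − 1| ≥ 1. Then |∫_0^1 f(t) e^{−2πint} dt| ≤ ∫_0^1 |f(t+h) − f(t)| dt. -/

import Mathlib

open MeasureTheory intervalIntegral Complex

lemma per_int_aux (g : ℝ → ℂ) (hg : Function.Periodic g 1)
    (hi : IntervalIntegrable g volume 0 1) (k : ℤ) :
    IntervalIntegrable g volume k (k + 1) := by
  have h2 := hi.comp_sub_right (k : ℝ)
  have : (fun x => g (x - (k : ℝ))) = g := by
    funext x
    have := (hg.zsmul (-k)) x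
    simpa [sub_eq_add_neg] using this
  rw [this] at h2
  simpa [add_comm] using h2

lemma per_int (g : ℝ → ℂ) (hg : Function.Periodic g 1)
    (hi : IntervalIntegrable g volume 0 1) (h : ℝ) (hh : 0 < h) :
    IntervalIntegrable g volume h (1 + h) := by
  set k : ℤ := ⌊h⌋ with hk
  have h1 : IntervalIntegrable g volume k (k + 1) := per_int_aux g hg hi k
  have h2 : IntervalIntegrable g volume (k + 1) (k + 2) := by
    simpa [add_assoc, one_add_one_eq_two] using per_int_aux g hg hi (k + 1)
  have h3 : IntervalIntegrable g volume k (k + 2) := h1.trans h2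
  apply h3.mono_set
  have hfl : (k : ℝ) ≤ h := Int.floor_le h
  have hfu : h ≤ (k : ℝ) + 1 := (Int.lt_floor_add_one h).le
  rw [Set.uIcc_of_le (by linarith), Set.uIcc_of_le (by linarith)]
  exact Set.Icc_subset_Icc (by linarith) (by linarith)

theorem stmt_2 (f : ℝ → ℂ) (hper : Function.Periodic f 1)
    (hint : IntervalIntegrable f MeasureTheory.volume 0 1)
    (h : ℝ) (hh : 0 < h) (n : ℕ) (hn : 0 < n)
    (hfar : 1 ≤ ‖Complex.exp (2 * Real.pi * Complex.I * n * h) - 1‖) :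
    ‖∫ t in (0:ℝ)..1, f t * Complex.exp (-(2 * Real.pi * Complex.I * n * t))‖ ≤
      ∫ t in (0:ℝ)..1, ‖f (t + h) - f t‖ := by
  set e : ℝ → ℂ := fun t => Complex.exp (-(2 * Real.pi * Complex.I * n * t)) with he
  set g : ℝ → ℂ := fun t => f t * e t with hg
  set E : ℂ := Complex.exp (2 * Real.pi * Complex.I * n * h) with hE
  have heper : Function.Periodic e 1 := by
    intro t
    simp only [he]
    push_cast
    rw [show -(2 * (Real.pi:ℂ) * Complex.I * n * (t + 1))
        = -(2 * Real.pi * Complex.I * n * t) + (-n : ℤ) * (2 * Real.pi * Complex.I) by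
      push_cast; ring, Complex.exp_add, Complex.exp_int_mul_two_pi_mul_I, mul_one]
  have hgper : Function.Periodic g 1 := by
    intro t; simp only [hg, hper t, heper t]
  have hgint : IntervalIntegrable g volume 0 1 :=
    hint.mul_continuousOn (Continuous.continuousOn (by continuity))
  have hEe : ∀ t : ℝ, E * g (t + h) = f (t + h) * e t := by
    intro t
    simp only [hg, he, hE]
    have hx : Complex.exp (2 * Real.pi * Complex.I * n * h) *
        Complex.exp (-(2 * Real.pi * Complex.I * n * ((t + h : ℝ) : ℂ))) =
        Complex.exp (-(2 * Real.pi * Complex.I * n * t)) := by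
      rw [← Complex.exp_add]; congr 1; push_cast; ring
    calc Complex.exp (2 * Real.pi * Complex.I * n * h) *
          (f (t + h) * Complex.exp (-(2 * Real.pi * Complex.I * n * ((t + h : ℝ) : ℂ))))
        = f (t + h) * (Complex.exp (2 * Real.pi * Complex.I * n * h) *
          Complex.exp (-(2 * Real.pi * Complex.I * n * ((t + h : ℝ) : ℂ)))) := by ring
      _ = _ := by rw [hx]
  have hshift : IntervalIntegrable (fun t => g (t + h)) volume 0 1 := by
    have := (per_int g hgper hgint h hh).comp_add_right h
    simpa using this
  have htrans : IntervalIntegrable (fun t => f (t + h) * e t) volume 0 1 := by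
    have : IntervalIntegrable (fun t => E * g (t + h)) volume 0 1 := hshift.const_mul E
    exact this.congr (fun t _ => hEe t)
  have hkey : (∫ t in (0:ℝ)..1, f (t + h) * e t) = E * ∫ t in (0:ℝ)..1, g t := by
    calc (∫ t in (0:ℝ)..1, f (t + h) * e t) = ∫ t in (0:ℝ)..1, E * g (t + h) := by
          apply intervalIntegral.integral_congr; intro t _; exact (hEe t).symm
      _ = E * ∫ t in (0:ℝ)..1, g (t + h) := intervalIntegral.integral_const_mul _ _
      _ = E * ∫ t in h..(1 + h), g t := by rw [intervalIntegral.integral_comp_add_right]; norm_num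
      _ = E * ∫ t in (0:ℝ)..1, g t := by
          have := hgper.intervalIntegral_add_eq h 0
          rw [add_comm 1 h, this]; norm_num
  have hdiff : (∫ t in (0:ℝ)..1, (f (t + h) - f t) * e t)
      = (E - 1) * ∫ t in (0:ℝ)..1, g t := by
    have : (∫ t in (0:ℝ)..1, (f (t + h) - f t) * e t)
        = (∫ t in (0:ℝ)..1, f (t + h) * e t) - ∫ t in (0:ℝ)..1, g t := by
      rw [← intervalIntegral.integral_sub htrans hgint]
      apply intervalIntegral.integral_congr; intro t _; simp [hg]; ring
    rw [this, hkey]; ring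
  have hnorm1 : (1:ℝ) * ‖∫ t in (0:ℝ)..1, g t‖ ≤ ‖(E - 1) * ∫ t in (0:ℝ)..1, g t‖ := by
    rw [norm_mul]
    gcongr
  have hbound : ‖∫ t in (0:ℝ)..1, (f (t + h) - f t) * e t‖
      ≤ ∫ t in (0:ℝ)..1, ‖f (t + h) - f t‖ := by
    refine le_trans (intervalIntegral.norm_integral_le_integral_norm (by norm_num)) ?_
    apply le_of_eq
    apply intervalIntegral.integral_congr
    intro t _
    have : ‖e t‖ = 1 := by
      simp only [he, Complex.norm_exp]
      norm_num [Complex.exp_re]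
    simp [norm_mul, this]
  calc ‖∫ t in (0:ℝ)..1, g t‖ = 1 * ‖∫ t in (0:ℝ)..1, g t‖ := (one_mul _).symm
    _ ≤ ‖(E - 1) * ∫ t in (0:ℝ)..1, g t‖ := hnorm1
    _ = ‖∫ t in (0:ℝ)..1, (f (t + h) - f t) * e t‖ := by rw [hdiff]
    _ ≤ _ := hbound
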